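/- arXiv:1512.05983 — 2 statements merged into one kernel-verified Lean document; each statement's English description precedes it below -/
import Mathlib

section
/- The map 𝒫_𝒜 := 𝒜 ∘ M_λ ∘ 𝒞, where M_λ f(x) = e^{λx} f(x) on [0,T) and 𝒞 is the restriction map L²(ℝ₊,ℂ) → L²([0,T),ℂ), is a continuous linear projection (𝒫_𝒜² = 𝒫_𝒜) with range ran(𝒜), kernel F = {f ∈ L²(ℝ₊,ℂ) : f = 0 a.e. on [0,T)}, operator norm equal to (1 − e^{-2λT})^{-1/2}, and 𝒫_𝒜 f(x) = f(x) for a.e. x ∈ [0,T]. -/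
open MeasureTheory

/-- `cut T x = x mod T`. -/
noncomputable def cut (T x : ℝ) : ℝ := x - T * ⌊x / T⌋

open Set

/-- The operator `𝒜`, `(𝒜 f)(x) = e^{-λ x} f(cut x)`. -/
noncomputable def Aop (T lm : ℝ) (f : ℝ → ℂ) : ℝ → ℂ :=
  fun x => Real.exp (-lm * x) • f (cut T x)

/-- The projection `𝒫_𝒜 = 𝒜 ∘ M_λ ∘ 𝒞`, where `M_λ` is multiplication by `e^{λx}`
on `[0,T)` and `𝒞` is restriction to `[0,T)`; explicitly
`(𝒫_𝒜 f)(x) = e^{-λx} e^{λ cut(x)} f(cut(x))`. -/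
noncomputable def Pop (T lm : ℝ) (f : ℝ → ℂ) : ℝ → ℂ :=
  Aop T lm (fun y => Real.exp (lm * y) • f y)

lemma cut_eq_fract (T : ℝ) (hT : T ≠ 0) (x : ℝ) : cut T x = T * Int.fract (x / T) := by
  rw [cut, Int.fract]; field_simp

lemma cut_mem (T : ℝ) (hT : 0 < T) (x : ℝ) : cut T x ∈ Ico 0 T := by
  rw [cut_eq_fract T hT.ne' x]
  refine ⟨mul_nonneg hT.le (Int.fract_nonneg _), ?_⟩
  calc T * Int.fract (x / T) < T * 1 := mul_lt_mul_of_pos_left (Int.fract_lt_one _) hT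
    _ = T := mul_one T

lemma cut_of_mem {T : ℝ} (hT : 0 < T) {x : ℝ} (hx : x ∈ Ico 0 T) : cut T x = x := by
  rw [cut_eq_fract T hT.ne',
    Int.fract_eq_self.2 ⟨div_nonneg hx.1 hT.le, (div_lt_one hT).2 hx.2⟩]
  field_simp

lemma cut_idem (T : ℝ) (hT : 0 < T) (x : ℝ) : cut T (cut T x) = cut T x :=
  cut_of_mem hT (cut_mem T hT x)

lemma cut_add_int_mul (T : ℝ) (hT : 0 < T) (x : ℝ) (k : ℤ) : cut T (x + k * T) = cut T x := by
  rw [cut_eq_fract T hT.ne', cut_eq_fract T hT.ne',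
    show (x + k * T) / T = x / T + k by field_simp, Int.fract_add_intCast]

lemma cut_sub_floor (T : ℝ) (x : ℝ) : x - cut T x = T * ⌊x / T⌋ := by
  rw [cut]; ring

lemma cut_on_block {T : ℝ} (hT : 0 < T) (k : ℕ) {x : ℝ}
    (hx : x ∈ Ico (k * T) ((k + 1) * T)) : cut T x = x - k * T := by
  have : x - k * T ∈ Ico (0:ℝ) T := ⟨by linarith [hx.1], by have := hx.2; push_cast at this ⊢; linarith⟩
  have h2 := cut_add_int_mul T hT (x - k * T) k
  rw [cut_of_mem hT this] at h2
  push_cast at h2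
  rw [show x - ↑k * T + ↑k * T = x by ring] at h2
  linarith [h2]

lemma measurable_cut (T : ℝ) : Measurable (cut T) := by
  unfold cut
  measurability

lemma Ici_eq_iUnion (T : ℝ) (hT : 0 < T) :
    Ici (0:ℝ) = ⋃ k : ℕ, Ico ((k:ℝ) * T) ((k + 1 : ℕ) * T) := by
  ext x
  simp only [mem_Ici, mem_iUnion, mem_Ico]
  constructor
  · intro hx
    refine ⟨⌊x / T⌋.toNat, ?_, ?_⟩
    · have h1 : (⌊x / T⌋ : ℝ) ≤ x / T := Int.floor_le _
      have h0 : (0:ℤ) ≤ ⌊x / T⌋ := Int.floor_nonneg.2 (div_nonneg hx hT.le)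
      have hcast : ((⌊x / T⌋.toNat : ℕ) : ℝ) = (⌊x / T⌋ : ℝ) := by
        exact_mod_cast congrArg Int.cast (Int.toNat_of_nonneg h0)
      rw [hcast]
      calc (⌊x / T⌋ : ℝ) * T ≤ (x / T) * T := by nlinarith
        _ = x := by field_simp
    · have h2 : x / T < ⌊x / T⌋ + 1 := Int.lt_floor_add_one _
      have h0 : (0:ℤ) ≤ ⌊x / T⌋ := Int.floor_nonneg.2 (div_nonneg hx hT.le)
      have : ((⌊x / T⌋.toNat + 1 : ℕ) : ℝ) = (⌊x / T⌋ : ℝ) + 1 := by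
        have hcast : ((⌊x / T⌋.toNat : ℕ) : ℝ) = (⌊x / T⌋ : ℝ) := by
          exact_mod_cast congrArg Int.cast (Int.toNat_of_nonneg h0)
        push_cast; rw [hcast]
      rw [this]
      calc x = (x / T) * T := by field_simp
        _ < ((⌊x / T⌋:ℝ) + 1) * T := by nlinarith
  · rintro ⟨k, hk1, _⟩
    have : (0:ℝ) ≤ (k:ℝ) * T := by positivity
    linarith

lemma blocks_disjoint (T : ℝ) (hT : 0 < T) :
    Pairwise (Function.onFun Disjoint fun k : ℕ => Ico ((k:ℝ) * T) ((k + 1 : ℕ) * T)) := by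
  intro i j hij
  apply Set.disjoint_left.2
  rintro x ⟨hi1, hi2⟩ ⟨hj1, hj2⟩
  rcases lt_or_gt_of_ne hij with h | h
  · have : ((i + 1 : ℕ) : ℝ) ≤ (j : ℝ) := by exact_mod_cast h
    nlinarith
  · have : ((j + 1 : ℕ) : ℝ) ≤ (i : ℝ) := by exact_mod_cast h
    nlinarith

/-- If `P` holds a.e. on `[0,T)` then `P (cut T x)` holds a.e. on `[0,∞)`. -/
lemma ae_cut {T : ℝ} (hT : 0 < T) {P : ℝ → Prop}
    (h : ∀ᵐ x ∂(volume.restrict (Ico 0 T)), P x) :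
    ∀ᵐ x ∂(volume.restrict (Ici (0:ℝ))), P (cut T x) := by
  rw [ae_restrict_iff' measurableSet_Ico] at h
  rw [ae_restrict_iff' measurableSet_Ici]
  set N : Set ℝ := {x | ¬ P x} ∩ Ico 0 T with hN
  have hNnull : volume N = 0 := by
    have := (ae_iff.1 h)
    refine measure_mono_null ?_ this
    intro x hx
    simp only [mem_setOf_eq, Classical.not_imp]
    exact ⟨hx.2, hx.1⟩
  have himg : ∀ k : ℕ, volume ((fun y => y + (k:ℝ) * T) '' N) = 0 := by
    intro k
    have : (fun y => y + (k:ℝ) * T) '' N = (fun y => y + (-((k:ℝ) * T))) ⁻¹' N := by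
      ext x
      simp only [mem_image, mem_preimage]
      constructor
      · rintro ⟨y, hy, rfl⟩; simpa using hy
      · intro hx; exact ⟨x + -((k:ℝ)*T), hx, by ring⟩
    rw [this, measure_preimage_add_right]
    exact hNnull
  have hsub : {x | ¬ (x ∈ Ici (0:ℝ) → P (cut T x))} ⊆ ⋃ k : ℕ, (fun y => y + (k:ℝ) * T) '' N := by
    intro x hx
    simp only [mem_setOf_eq, Classical.not_imp, mem_Ici] at hx
    obtain ⟨hx0, hxP⟩ := hx
    have hk0 : (0:ℤ) ≤ ⌊x / T⌋ := Int.floor_nonneg.2 (div_nonneg hx0 hT.le)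
    refine mem_iUnion.2 ⟨⌊x / T⌋.toNat, cut T x, ⟨hxP, cut_mem T hT x⟩, ?_⟩
    have hcast : ((⌊x / T⌋.toNat : ℕ) : ℝ) = (⌊x / T⌋ : ℝ) := by
      exact_mod_cast congrArg Int.cast (Int.toNat_of_nonneg hk0)
    rw [hcast]
    have := cut_sub_floor T x
    linarith
  rw [ae_iff]
  exact measure_mono_null hsub (measure_iUnion_null himg)

lemma lintegral_Ico_translate (g : ℝ → ENNReal) (a b c : ℝ) :
    ∫⁻ x in Ico a b, g (x - c) = ∫⁻ y in Ico (a - c) (b - c), g y := by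
  have hco : ⇑(MeasurableEquiv.addRight c) = fun x : ℝ => x + c := rfl
  have hmap : Measure.map (⇑(MeasurableEquiv.addRight c)) volume = volume := by
    rw [hco]; exact map_add_right_eq_self volume c
  have hpre : (⇑(MeasurableEquiv.addRight c)) ⁻¹' Ico a b = Ico (a - c) (b - c) := by
    rw [hco]; exact Set.preimage_add_const_Ico c a b
  calc ∫⁻ x in Ico a b, g (x - c)
      = ∫⁻ x, g (x - c)
          ∂((Measure.map (⇑(MeasurableEquiv.addRight c)) volume).restrict (Ico a b)) := by
        rw [hmap]
    _ = ∫⁻ x, g (x - c)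
          ∂(Measure.map (⇑(MeasurableEquiv.addRight c))
            (volume.restrict ((⇑(MeasurableEquiv.addRight c)) ⁻¹' Ico a b))) := by
        rw [Measure.restrict_map (MeasurableEquiv.measurable _) measurableSet_Ico]
    _ = ∫⁻ y, g (y + c - c) ∂(volume.restrict (Ico (a - c) (b - c))) := by
        rw [hpre, MeasureTheory.lintegral_map_equiv]
        exact lintegral_congr fun y => by rw [hco]
    _ = ∫⁻ y in Ico (a - c) (b - c), g y := by
        apply lintegral_congr; intro y; rw [add_sub_cancel_right]

lemma Pop_apply (T lm : ℝ) (f : ℝ → ℂ) (x : ℝ) :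
    Pop T lm f x = (Real.exp (-lm * x) * Real.exp (lm * cut T x)) • f (cut T x) := by
  simp only [Pop, Aop, smul_smul, Complex.real_smul, Complex.ofReal_mul,
    Complex.ofReal_exp, Complex.ofReal_neg, mul_assoc]

lemma norm_Pop_sq (T lm : ℝ) (f : ℝ → ℂ) (x : ℝ) :
    ‖Pop T lm f x‖ ^ 2 = Real.exp (-2 * lm * (x - cut T x)) * ‖f (cut T x)‖ ^ 2 := by
  rw [Pop_apply, norm_smul]
  rw [Real.norm_eq_abs, abs_of_pos (by positivity), mul_pow, ← Real.exp_add,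
    ← Real.exp_nat_mul]
  congr 2
  push_cast
  ring

lemma key_lintegral (T lm : ℝ) (hT : 0 < T) (f : ℝ → ℂ) :
    ∫⁻ x in Ici (0:ℝ), ENNReal.ofReal (‖Pop T lm f x‖ ^ 2)
      = (1 - ENNReal.ofReal (Real.exp (-2 * lm * T)))⁻¹ *
          ∫⁻ x in Ico (0:ℝ) T, ENNReal.ofReal (‖f x‖ ^ 2) := by
  set L := ∫⁻ x in Ico (0:ℝ) T, ENNReal.ofReal (‖f x‖ ^ 2) with hL
  have block : ∀ k : ℕ,
      ∫⁻ x in Ico ((k:ℝ) * T) (((k:ℕ) + 1 : ℕ) * T), ENNReal.ofReal (‖Pop T lm f x‖ ^ 2)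
        = ENNReal.ofReal (Real.exp (-2 * lm * T)) ^ k * L := by
    intro k
    have h1 : ∫⁻ x in Ico ((k:ℝ) * T) (((k:ℕ) + 1 : ℕ) * T), ENNReal.ofReal (‖Pop T lm f x‖ ^ 2)
        = ∫⁻ x in Ico ((k:ℝ) * T) (((k:ℕ) + 1 : ℕ) * T),
            ENNReal.ofReal (Real.exp (-2 * lm * T)) ^ k * ENNReal.ofReal (‖f (x - (k:ℝ) * T)‖ ^ 2) := by
      apply setLIntegral_congr_fun measurableSet_Ico
      intro x hx
      beta_reduce
      rw [norm_Pop_sq, cut_on_block hT k (by exact_mod_cast hx)]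
      rw [show x - (x - (k:ℝ) * T) = (k:ℝ) * T by ring]
      rw [show (-2) * lm * ((k:ℝ) * T) = (k:ℕ) * (-2 * lm * T) by ring,
        Real.exp_nat_mul, ENNReal.ofReal_mul (by positivity), ENNReal.ofReal_pow (by positivity)]
    rw [h1, lintegral_const_mul' _ _ (by simp [ENNReal.pow_ne_top, ENNReal.ofReal_ne_top])]
    congr 1
    have h2 := lintegral_Ico_translate (fun y => ENNReal.ofReal (‖f y‖ ^ 2))
      ((k:ℝ) * T) (((k:ℕ) + 1 : ℕ) * T) ((k:ℝ) * T)
    rw [show (k:ℝ) * T - (k:ℝ) * T = 0 by ring,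
      show (((k:ℕ) + 1 : ℕ) : ℝ) * T - (k:ℝ) * T = T by push_cast; ring] at h2
    exact h2
  calc ∫⁻ x in Ici (0:ℝ), ENNReal.ofReal (‖Pop T lm f x‖ ^ 2)
      = ∑' k : ℕ, ∫⁻ x in Ico ((k:ℝ) * T) (((k:ℕ) + 1 : ℕ) * T),
          ENNReal.ofReal (‖Pop T lm f x‖ ^ 2) := by
        rw [Ici_eq_iUnion T hT,
          Measure.restrict_iUnion (blocks_disjoint T hT) (fun k => measurableSet_Ico),
          lintegral_sum_measure]
    _ = ∑' k : ℕ, ENNReal.ofReal (Real.exp (-2 * lm * T)) ^ k * L := by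
        exact tsum_congr block
    _ = (1 - ENNReal.ofReal (Real.exp (-2 * lm * T)))⁻¹ * L := by
        rw [ENNReal.tsum_mul_right, ENNReal.tsum_geometric]

lemma factor_pos {T lm : ℝ} (hT : 0 < T) (hl : 0 < lm) : 0 < 1 - Real.exp (-2 * lm * T) := by
  have : Real.exp (-2 * lm * T) < 1 := Real.exp_lt_one_iff.2 (by nlinarith)
  linarith

lemma key_integral (T lm : ℝ) (hT : 0 < T) (hl : 0 < lm) (f : ℝ → ℂ)
    (hf : IntegrableOn (fun x => ‖f x‖ ^ 2) (Ici 0)) :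
    ∫ x in Ici (0:ℝ), ‖Pop T lm f x‖ ^ 2
      = (1 / (1 - Real.exp (-2 * lm * T))) * ∫ x in Ico (0:ℝ) T, ‖f x‖ ^ 2 := by
  set q := Real.exp (-2 * lm * T) with hq
  have hq0 : 0 ≤ q := Real.exp_nonneg _
  have hq1 : q < 1 := by linarith [factor_pos hT hl]
  -- integrability on Ico 0 T
  have hfI : IntegrableOn (fun x => ‖f x‖ ^ 2) (Ico 0 T) :=
    hf.mono_set Ico_subset_Ici_self
  -- measurability of the Pop integrand
  have hφm := hfI.aestronglyMeasurable
  set ψ := hφm.mk _ with hψ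
  have hψmeas : StronglyMeasurable ψ := hφm.stronglyMeasurable_mk
  have hφψ : ∀ᵐ x ∂(volume.restrict (Ico (0:ℝ) T)), ‖f x‖ ^ 2 = ψ x := hφm.ae_eq_mk
  have hPm : AEStronglyMeasurable (fun x => ‖Pop T lm f x‖ ^ 2) (volume.restrict (Ici (0:ℝ))) := by
    refine ⟨fun x => Real.exp (-2 * lm * (x - cut T x)) * ψ (cut T x), ?_, ?_⟩
    · apply StronglyMeasurable.mul
      · exact (Real.continuous_exp.comp (continuous_const.mul continuous_id)
          |>.stronglyMeasurable.comp_measurable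
          (measurable_id.sub (measurable_cut T)) : StronglyMeasurable
            fun x : ℝ => Real.exp (-2 * lm * (x - cut T x)))
      · exact hψmeas.comp_measurable (measurable_cut T)
    · filter_upwards [ae_cut hT hφψ] with x hx
      rw [norm_Pop_sq, hx]
  -- lintegral finiteness
  have hL : ∫⁻ x in Ico (0:ℝ) T, ENNReal.ofReal (‖f x‖ ^ 2) ≠ ⊤ := by
    have h2 := hfI.2
    rw [HasFiniteIntegral] at h2
    refine ne_top_of_le_ne_top h2.ne (lintegral_mono fun x => ?_)
    rw [← ofReal_norm_eq_enorm]
    exact ENNReal.ofReal_le_ofReal (le_abs_self _)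
  have hfac : (1 : ENNReal) - ENNReal.ofReal q ≠ ⊤ := by
    exact ne_top_of_le_ne_top ENNReal.one_ne_top tsub_le_self
  have hfacne : (1 : ENNReal) - ENNReal.ofReal q ≠ 0 := by
    rw [← pos_iff_ne_zero]
    exact tsub_pos_of_lt (ENNReal.ofReal_lt_one.2 hq1)
  have e1 : ∫ x in Ici (0:ℝ), ‖Pop T lm f x‖ ^ 2
      = (∫⁻ x in Ici (0:ℝ), ENNReal.ofReal (‖Pop T lm f x‖ ^ 2)).toReal := by
    apply integral_eq_lintegral_of_nonneg_ae _ hPm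
    filter_upwards with x using by positivity
  have e2 : ∫ x in Ico (0:ℝ) T, ‖f x‖ ^ 2
      = (∫⁻ x in Ico (0:ℝ) T, ENNReal.ofReal (‖f x‖ ^ 2)).toReal := by
    apply integral_eq_lintegral_of_nonneg_ae _ hφm
    filter_upwards with x using by positivity
  rw [e1, e2, key_lintegral T lm hT f, ENNReal.toReal_mul, ENNReal.toReal_inv,
    ENNReal.toReal_sub_of_le (ENNReal.ofReal_lt_one.2 hq1).le ENNReal.one_ne_top,
    ENNReal.toReal_one, ENNReal.toReal_ofReal hq0, one_div]

/-- `𝒫_𝒜` is a continuous linear projection with range `ran 𝒜`,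
kernel `{f : f = 0 a.e. on [0,T)}`, operator norm `(1 - e^{-2λT})^{-1/2}`,
and `𝒫_𝒜 f = f` on `[0,T)`. -/
theorem stmt_4 (T lm : ℝ) (hT : 0 < T) (hl : 0 < lm) :
    -- linearity
    (∀ (c : ℂ) (f g : ℝ → ℂ),
      Pop T lm (fun x => c • f x + g x) = fun x => c • Pop T lm f x + Pop T lm g x) ∧
    -- idempotence: 𝒫_𝒜² = 𝒫_𝒜
    (∀ (f : ℝ → ℂ) (x : ℝ), Pop T lm (Pop T lm f) x = Pop T lm f x) ∧
    -- 𝒫_𝒜 f = f on [0,T)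
    (∀ (f : ℝ → ℂ), ∀ x ∈ Set.Ico 0 T, Pop T lm f x = f x) ∧
    -- the range of 𝒫_𝒜 is exactly ran 𝒜
    (∀ f : ℝ → ℂ, Pop T lm f = Aop T lm (fun y => Real.exp (lm * y) • f y)) ∧
    (∀ (f : ℝ → ℂ) (x : ℝ), Pop T lm (Aop T lm f) x = Aop T lm f x) ∧
    -- the kernel of 𝒫_𝒜 is F = {f : f = 0 a.e. on [0,T)}
    (∀ f : ℝ → ℂ,
      ((Pop T lm f) =ᵐ[volume.restrict (Set.Ici (0:ℝ))] 0 ↔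
        f =ᵐ[volume.restrict (Set.Ico 0 T)] 0)) ∧
    -- operator norm equals (1-e^{-2λT})^{-1/2}: the bound ...
    (∀ f : ℝ → ℂ, IntegrableOn (fun x => ‖f x‖ ^ 2) (Set.Ici 0) →
      (∫ x in Set.Ici (0:ℝ), ‖Pop T lm f x‖ ^ 2)
        ≤ (1 / (1 - Real.exp (-2 * lm * T))) * ∫ x in Set.Ici (0:ℝ), ‖f x‖ ^ 2) ∧
    -- ... is attained on functions supported in [0,T)
    (∀ f : ℝ → ℂ, IntegrableOn (fun x => ‖f x‖ ^ 2) (Set.Ici 0) →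
      (f =ᵐ[volume.restrict (Set.Ici T)] 0) →
      (∫ x in Set.Ici (0:ℝ), ‖Pop T lm f x‖ ^ 2)
        = (1 / (1 - Real.exp (-2 * lm * T))) * ∫ x in Set.Ici (0:ℝ), ‖f x‖ ^ 2) := by
  have hPopIco : ∀ (f : ℝ → ℂ), ∀ x ∈ Set.Ico (0:ℝ) T, Pop T lm f x = f x := by
    intro f x hx
    rw [Pop_apply, cut_of_mem hT hx, ← Real.exp_add,
      show -lm * x + lm * x = 0 by ring, Real.exp_zero, one_smul]
  refine ⟨?_, ?_, hPopIco, ?_, ?_, ?_, ?_, ?_⟩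
  · intro c f g
    funext x
    simp only [Pop_apply, smul_add, smul_comm _ c]
  · intro f x
    rw [Pop_apply, Pop_apply, Pop_apply, cut_idem T hT, smul_smul]
    congr 1
    simp only [← Real.exp_add]
    congr 1; ring
  · intro f; rfl
  · intro f x
    rw [Pop_apply]
    simp only [Aop]
    rw [cut_idem T hT, smul_smul]
    congr 1
    simp only [← Real.exp_add]
    congr 1; ring
  · intro f
    constructor
    · intro h
      have h2 := ae_restrict_of_ae_restrict_of_subset (Ico_subset_Ici_self : Ico (0:ℝ) T ⊆ Ici 0) h
      filter_upwards [h2, ae_restrict_mem measurableSet_Ico] with x hx hmem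
      rw [← hPopIco f x hmem]
      exact hx
    · intro h
      have h' : ∀ᵐ x ∂(volume.restrict (Ico (0:ℝ) T)), f x = 0 :=
        h.mono fun x hx => by simpa using hx
      filter_upwards [ae_cut hT h'] with x hx
      simp [Pop_apply, hx]
  · intro f hf
    rw [key_integral T lm hT hl f hf]
    have h1 : 0 ≤ 1 / (1 - Real.exp (-2 * lm * T)) :=
      one_div_nonneg.2 (factor_pos hT hl).le
    refine mul_le_mul_of_nonneg_left ?_ h1
    exact setIntegral_mono_set hf
      (Filter.Eventually.of_forall fun x => by positivity)
      (HasSubset.Subset.eventuallyLE Ico_subset_Ici_self)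
  · intro f hf hsupp
    rw [key_integral T lm hT hl f hf]
    congr 1
    have hzero : ∫ x in Ici T, ‖f x‖ ^ 2 = 0 := by
      apply integral_eq_zero_of_ae
      filter_upwards [hsupp] with x hx
      simp [hx]
    have hdisj : Disjoint (Ico (0:ℝ) T) (Ici T) :=
      Set.disjoint_left.2 fun x hx1 hx2 => (not_le.2 hx1.2) hx2
    rw [show Ici (0:ℝ) = Ico 0 T ∪ Ici T from (Ico_union_Ici_eq_Ici hT.le).symm,
      setIntegral_union hdisj measurableSet_Ici (hf.mono_set Ico_subset_Ici_self)
        (hf.mono_set (Ici_subset_Ici.2 hT.le)), hzero, add_zero]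
end

section
/- For any two elements h, g in the range of 𝒜 ⊂ L²(ℝ₊,ℂ), the L²(ℝ₊) inner product equals (1 − e^{-2λT})⁻¹ times the inner product of their restrictions to [0,T]: ⟨h, g⟩_{L²(ℝ₊)} = (1 − e^{-2λT})⁻¹ ∫₀^T h(x) conj(g(x)) dx. -/
open MeasureTheory Complex

lemma cut_eq_self {T x : ℝ} (hT : 0 < T) (hx : x ∈ Set.Ico 0 T) : cut T x = x := by
  have h0 : ⌊x / T⌋ = 0 := by
    rw [Int.floor_eq_zero_iff]
    exact ⟨div_nonneg hx.1 hT.le, (div_lt_one hT).2 hx.2⟩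
  simp [cut, h0]

lemma cut_add_nat {T x : ℝ} (hT : 0 < T) (hx : x ∈ Set.Ico 0 T) (n : ℕ) :
    cut T (x + n * T) = x := by
  have h0 : ⌊x / T⌋ = 0 := by
    rw [Int.floor_eq_zero_iff]
    exact ⟨div_nonneg hx.1 hT.le, (div_lt_one hT).2 hx.2⟩
  have hdiv : (x + n * T) / T = x / T + n := by
    field_simp
  have hfl : ⌊(x + n * T) / T⌋ = n := by
    rw [hdiv, Int.floor_add_natCast, h0, zero_add]
  unfold cut
  rw [hfl]
  push_cast
  ring

/-- for `h, g ∈ ran 𝒜 ⊆ L²(ℝ₊,ℂ)`, the `L²(ℝ₊)` inner product equals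
`(1-e^{-2λT})⁻¹` times the inner product of the restrictions to `[0,T]`. -/
theorem stmt_14 (T lm : ℝ) (hT : 0 < T) (hl : 0 < lm)
    (f g : ℝ → ℂ)
    (hf : MemLp f 2 (volume.restrict (Set.Ico 0 T)))
    (hg : MemLp g 2 (volume.restrict (Set.Ico 0 T))) :
    (∫ x in Set.Ici (0:ℝ), Aop T lm f x * (starRingEnd ℂ) (Aop T lm g x))
      = (1 - Real.exp (-2 * lm * T))⁻¹ •
          ∫ x in Set.Ico 0 T, Aop T lm f x * (starRingEnd ℂ) (Aop T lm g x) := by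
  set F : ℝ → ℂ := fun x => Aop T lm f x * (starRingEnd ℂ) (Aop T lm g x) with hF
  set r : ℝ := Real.exp (-2 * lm * T) with hr
  have hr0 : 0 ≤ r := (Real.exp_pos _).le
  have hr1 : r < 1 := by
    rw [hr]
    apply Real.exp_lt_one_iff.2
    nlinarith
  -- pointwise formula for F
  have hFx : ∀ x, F x
      = Real.exp (-2 * lm * x) • (f (cut T x) * (starRingEnd ℂ) (g (cut T x))) := by
    intro x
    simp only [hF, Aop, Complex.real_smul, map_mul, Complex.conj_ofReal]
    rw [show (-2 * lm * x) = (-lm * x) + (-lm * x) by ring, Real.exp_add]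
    push_cast
    ring
  -- the blocks
  set s : ℕ → Set ℝ := fun n => Set.Ico ((n : ℝ) * T) (((n : ℝ) + 1) * T) with hs
  have hm : ∀ n, MeasurableSet (s n) := fun n => measurableSet_Ico
  have hd : Pairwise (Function.onFun Disjoint s) := by
    intro m n hmn
    simp only [Function.onFun, hs]
    rw [Set.Ico_disjoint_Ico]
    rcases lt_or_gt_of_ne hmn with h | h
    · have : ((m : ℝ) + 1) * T ≤ (n : ℝ) * T := by
        apply mul_le_mul_of_nonneg_right _ hT.le
        exact_mod_cast Nat.succ_le_of_lt h
      exact le_trans (inf_le_left) (le_trans this (le_sup_right))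
    · have : ((n : ℝ) + 1) * T ≤ (m : ℝ) * T := by
        apply mul_le_mul_of_nonneg_right _ hT.le
        exact_mod_cast Nat.succ_le_of_lt h
      exact le_trans (inf_le_right) (le_trans this (le_sup_left))
  have hunion : Set.Ici (0 : ℝ) = ⋃ n, s n := by
    ext x
    simp only [Set.mem_Ici, Set.mem_iUnion, Set.mem_Ico, hs]
    constructor
    · intro hx
      refine ⟨⌊x / T⌋.toNat, ?_, ?_⟩
      · have h0 : (0 : ℤ) ≤ ⌊x / T⌋ := Int.floor_nonneg.mpr (div_nonneg hx hT.le)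
        have hcast : ((⌊x / T⌋.toNat : ℕ) : ℝ) = ((⌊x / T⌋ : ℤ) : ℝ) := by
          exact_mod_cast Int.toNat_of_nonneg h0
        rw [hcast]
        have := Int.floor_le (x / T)
        calc ((⌊x / T⌋ : ℤ) : ℝ) * T ≤ (x / T) * T := by
              exact mul_le_mul_of_nonneg_right this hT.le
          _ = x := by field_simp
      · have h0 : (0 : ℤ) ≤ ⌊x / T⌋ := Int.floor_nonneg.mpr (div_nonneg hx hT.le)
        have hcast : ((⌊x / T⌋.toNat : ℕ) : ℝ) = ((⌊x / T⌋ : ℤ) : ℝ) := by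
          exact_mod_cast Int.toNat_of_nonneg h0
        rw [hcast]
        have := Int.lt_floor_add_one (x / T)
        calc x = (x / T) * T := by field_simp
          _ < (((⌊x / T⌋ : ℤ) : ℝ) + 1) * T := by
              exact mul_lt_mul_of_pos_right this hT
    · rintro ⟨n, h1, h2⟩
      refine le_trans ?_ h1
      positivity
  -- key translation identity
  have hkey : ∀ (n : ℕ), ∀ x ∈ Set.Ico (0 : ℝ) T, F (x + (n : ℝ) * T) = (r ^ n) • F x := by
    intro n x hx
    rw [hFx, hFx, cut_add_nat hT hx n, cut_eq_self hT hx, smul_smul]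
    congr 1
    rw [hr, ← Real.exp_nat_mul, ← Real.exp_add]
    congr 1
    ring
  -- measure preserving translations
  have emb : ∀ c : ℝ, MeasurableEmbedding (fun x : ℝ => x + c) := fun c =>
    (Homeomorph.addRight c).isClosedEmbedding.measurableEmbedding
  have hmp : ∀ n : ℕ, MeasurePreserving (fun x : ℝ => x + (n : ℝ) * T)
      (volume.restrict (Set.Ico 0 T)) (volume.restrict (s n)) := by
    intro n
    have hpre : (fun x : ℝ => x + (n : ℝ) * T) ⁻¹' (s n) = Set.Ico 0 T := by
      rw [hs, Set.preimage_add_const_Ico]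
      rw [show ((n : ℝ) + 1) * T - (n : ℝ) * T = T by ring, sub_self]
    refine ⟨measurable_add_const _, ?_⟩
    conv_rhs => rw [← (measurePreserving_add_right volume ((n : ℝ) * T)).map_eq]
    rw [Measure.restrict_map (measurable_add_const _) (hm n), hpre]
  -- integrability on the base block
  have hφ : Integrable (fun x => f x * (starRingEnd ℂ) (g x))
      (volume.restrict (Set.Ico 0 T)) := by
    have hgc : MemLp (fun x => (starRingEnd ℂ) (g x)) 2 (volume.restrict (Set.Ico 0 T)) := by
      refine ⟨Complex.continuous_conj.comp_aestronglyMeasurable hg.1, ?_⟩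
      rw [eLpNorm_congr_norm_ae (Filter.Eventually.of_forall fun x => RCLike.norm_conj _)]
      exact hg.2
    have hmul : MemLp (f • fun x => (starRingEnd ℂ) (g x)) 1 (volume.restrict (Set.Ico 0 T)) := by
      exact hgc.smul hf
    have := memLp_one_iff_integrable.mp hmul
    exact this.congr (Filter.Eventually.of_forall fun x => by
      simp [Pi.smul_apply, smul_eq_mul])
  have hbase : IntegrableOn F (Set.Ico 0 T) := by
    have hexp : MemLp (fun x => Real.exp (-2 * lm * x)) ⊤ (volume.restrict (Set.Ico 0 T)) := by
      refine memLp_top_of_bound (Continuous.aestronglyMeasurable (by continuity)) 1 ?_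
      refine (ae_restrict_iff' measurableSet_Ico).2 (Filter.Eventually.of_forall fun x hx => ?_)
      rw [Real.norm_eq_abs, _root_.abs_of_nonneg (Real.exp_pos _).le]
      apply Real.exp_le_one_iff.2
      nlinarith [hx.1]
    have h1 : Integrable (fun x => Real.exp (-2 * lm * x) • (f x * (starRingEnd ℂ) (g x)))
        (volume.restrict (Set.Ico 0 T)) := hφ.smul_of_top_right hexp
    apply h1.congr
    refine (ae_restrict_iff' measurableSet_Ico).2 (Filter.Eventually.of_forall fun x hx => ?_)
    rw [hFx, cut_eq_self hT hx]
  -- integrability on each block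
  have hblockInt : ∀ n : ℕ, IntegrableOn F (s n) := by
    intro n
    have h2 : Integrable (F ∘ fun x => x + (n : ℝ) * T) (volume.restrict (Set.Ico 0 T)) := by
      apply (hbase.smul (r ^ n)).congr
      refine (ae_restrict_iff' measurableSet_Ico).2 (Filter.Eventually.of_forall fun x hx => ?_)
      simp only [Function.comp_apply, Pi.smul_apply]
      exact (hkey n x hx).symm
    exact ((hmp n).integrable_comp_emb (emb _)).mp h2
  -- value of the integral on each block
  have hval : ∀ n : ℕ, ∫ x in s n, F x = (r ^ n) • ∫ x in Set.Ico (0 : ℝ) T, F x := by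
    intro n
    rw [← (hmp n).integral_comp (emb _) F]
    rw [setIntegral_congr_fun measurableSet_Ico (fun x hx => hkey n x hx)]
    exact integral_smul _ _
  -- norms
  have hnormval : ∀ n : ℕ, ∫ x in s n, ‖F x‖
      = r ^ n * ∫ x in Set.Ico (0 : ℝ) T, ‖F x‖ := by
    intro n
    rw [← (hmp n).integral_comp (emb _) (fun x => ‖F x‖)]
    rw [setIntegral_congr_fun measurableSet_Ico (fun x hx => by
      rw [hkey n x hx, norm_smul, Real.norm_eq_abs, _root_.abs_of_nonneg (pow_nonneg hr0 n)])]
    exact integral_const_mul _ _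
  have hsum : Summable (fun n : ℕ => ∫ x in s n, ‖F x‖) := by
    refine Summable.congr ?_ (fun n => (hnormval n).symm)
    exact (summable_geometric_of_lt_one hr0 hr1).mul_right _
  have hIci : IntegrableOn F (⋃ n, s n) :=
    integrableOn_iUnion_of_summable_integral_norm hblockInt hsum
  calc (∫ x in Set.Ici (0 : ℝ), F x) = ∫ x in ⋃ n, s n, F x := by rw [hunion]
    _ = ∑' n, ∫ x in s n, F x := integral_iUnion hm hd hIci
    _ = ∑' n : ℕ, (r ^ n) • ∫ x in Set.Ico (0 : ℝ) T, F x := tsum_congr hval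
    _ = (1 - r)⁻¹ • ∫ x in Set.Ico (0 : ℝ) T, F x := by
        rw [Summable.tsum_smul_const (summable_geometric_of_lt_one hr0 hr1),
          tsum_geometric_of_lt_one hr0 hr1]
end
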